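/- Fix s > 0. Then sup_{k > 0} |Call(s,k,v) − (s − k)⁺| → 0 as v → 0⁺, i.e., for every ε > 0 there exists v₀ > 0 such that for all v ∈ (0, v₀] and all k > 0, |Call(s,k,v) − (s − k)⁺| < ε. -/

import Mathlib

open MeasureTheory ProbabilityTheory Real Filter Set

/-- The standard normal CDF: the CDF of the Gaussian measure with mean 0 and variance 1. -/
noncomputable def stdNormalCDF (x : ℝ) : ℝ := ((gaussianReal 0 1) (Set.Iic x)).toReal

/-- The Black–Scholes call price `Call(s,k,v) = s·Φ(d₊) - k·Φ(d₋)`, with the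
convention `Call(s,0,v) = s`. -/
noncomputable def Call (s k v : ℝ) : ℝ :=
  if k = 0 then s
  else s * stdNormalCDF ((Real.log (s / k) + v / 2) / Real.sqrt v)
       - k * stdNormalCDF ((Real.log (s / k) - v / 2) / Real.sqrt v)

open scoped NNReal ENNReal

lemma intφ : Integrable (gaussianPDFReal 0 1) := integrable_gaussianPDFReal 0 1

lemma cdf_eq (x : ℝ) : stdNormalCDF x = ∫ u in Iic x, gaussianPDFReal 0 1 u := by
  rw [stdNormalCDF, gaussianReal_apply_eq_integral 0 one_ne_zero (Iic x),
    ENNReal.toReal_ofReal (setIntegral_nonneg measurableSet_Iic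
      fun u _ => gaussianPDFReal_nonneg 0 1 u)]

lemma cdf_total : ∫ u, gaussianPDFReal 0 1 u = 1 := integral_gaussianPDFReal_eq_one 0 one_ne_zero

lemma shift_Iic (f : ℝ → ℝ) (a w : ℝ) :
    ∫ x in Iic (a + w), f x = ∫ x in Iic a, f (x + w) := by
  have A : MeasurableEmbedding fun x : ℝ => x + w :=
    (Homeomorph.addRight w).isClosedEmbedding.measurableEmbedding
  have := MeasurableEmbedding.setIntegral_map (μ := volume) A f (Iic (a + w))
  rw [map_add_right_eq_self (volume : Measure ℝ) w] at this
  have hpre : (fun x : ℝ => x + w) ⁻¹' Iic (a + w) = Iic a := by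
    ext x; simp [Set.mem_preimage]
  rw [hpre] at this
  exact this

lemma cdf_mono {a b : ℝ} (h : a ≤ b) : stdNormalCDF a ≤ stdNormalCDF b := by
  rw [cdf_eq, cdf_eq]
  exact setIntegral_mono_set intφ.integrableOn
    (ae_of_all _ fun u => gaussianPDFReal_nonneg 0 1 u)
    (HasSubset.Subset.eventuallyLE (Iic_subset_Iic.2 h))

lemma cdf_le_one (a : ℝ) : stdNormalCDF a ≤ 1 := by
  rw [cdf_eq, ← cdf_total]
  exact setIntegral_le_integral intφ (ae_of_all _ fun u => gaussianPDFReal_nonneg 0 1 u)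

lemma pdf_le_one (u : ℝ) : gaussianPDFReal 0 1 u ≤ 1 := by
  rw [gaussianPDFReal]
  have hc : ((1:ℝ≥0):ℝ) = 1 := rfl
  rw [hc]
  have h1 : Real.exp (-(u - 0)^2 / (2 * 1)) ≤ 1 := by
    rw [Real.exp_le_one_iff]
    nlinarith [sq_nonneg (u - 0)]
  have hpi : (1:ℝ) ≤ √(2 * π * 1) := by
    rw [show (2 * π * 1 : ℝ) = 2 * π by ring]
    rw [show (1:ℝ) = √1 by simp]
    exact Real.sqrt_le_sqrt (by nlinarith [Real.pi_gt_three])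
  have h2 : (√(2 * π * 1))⁻¹ ≤ 1 := by
    rw [inv_le_one_iff₀]; right; exact hpi
  calc (√(2 * π * 1))⁻¹ * Real.exp (-(u-0)^2 / (2 * 1))
      ≤ 1 * 1 := mul_le_mul h2 h1 (Real.exp_nonneg _) zero_le_one
    _ = 1 := by norm_num

lemma cdf_diff_le {a b : ℝ} (h : a ≤ b) : stdNormalCDF b - stdNormalCDF a ≤ b - a := by
  rw [cdf_eq, cdf_eq]
  have hsplit : ∫ u in Iic b, gaussianPDFReal 0 1 u
      = (∫ u in Iic a, gaussianPDFReal 0 1 u) + ∫ u in Ioc a b, gaussianPDFReal 0 1 u := by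
    rw [← setIntegral_union (Iic_disjoint_Ioc le_rfl) measurableSet_Ioc
      intφ.integrableOn intφ.integrableOn, Iic_union_Ioc_eq_Iic h]
  rw [hsplit]
  have : ∫ u in Ioc a b, gaussianPDFReal 0 1 u ≤ ∫ (_ : ℝ) in Ioc a b, (1:ℝ) := by
    apply setIntegral_mono_on intφ.integrableOn (integrableOn_const (by
      rw [Real.volume_Ioc]; exact ENNReal.ofReal_ne_top)) measurableSet_Ioc
    exact fun u _ => pdf_le_one u
  have hvol : ∫ (_ : ℝ) in Ioc a b, (1:ℝ) = b - a := by
    simp [Real.volume_Ioc, ENNReal.toReal_ofReal (by linarith : (0:ℝ) ≤ b - a), h]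
  linarith

lemma cdf_neg (x : ℝ) : stdNormalCDF (-x) = 1 - stdNormalCDF x := by
  have h1 : ∫ u, gaussianPDFReal 0 1 u
      = (∫ u in Iic x, gaussianPDFReal 0 1 u) + ∫ u in Ioi x, gaussianPDFReal 0 1 u := by
    rw [← setIntegral_union (Iic_disjoint_Ioi le_rfl) measurableSet_Ioi
      intφ.integrableOn intφ.integrableOn, Iic_union_Ioi, setIntegral_univ]
  have heven : ∀ u : ℝ, gaussianPDFReal 0 1 (-u) = gaussianPDFReal 0 1 u := by
    intro u; rw [gaussianPDFReal, gaussianPDFReal]; ring_nf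
  have h2 : ∫ u in Iic (-x), gaussianPDFReal 0 1 u = ∫ u in Ioi x, gaussianPDFReal 0 1 u := by
    rw [← integral_comp_neg_Ioi]
    exact (setIntegral_congr_fun measurableSet_Ioi fun u _ => (heven u).symm).symm
  rw [cdf_eq, cdf_eq, h2]
  rw [cdf_total] at h1
  linarith

lemma cdf_nonneg (x : ℝ) : 0 ≤ stdNormalCDF x := ENNReal.toReal_nonneg

lemma cdf_master {a w : ℝ} (hw : 0 ≤ w) :
    stdNormalCDF a ≤ Real.exp (a * w + w^2 / 2) * stdNormalCDF (a + w) := by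
  rw [cdf_eq, cdf_eq, shift_Iic (gaussianPDFReal 0 1) a w, ← integral_const_mul]
  apply setIntegral_mono_on intφ.integrableOn
    (((intφ.comp_add_right w).const_mul _).integrableOn) measurableSet_Iic
  intro t ht
  have ht' : t ≤ a := ht
  rw [gaussianPDFReal, gaussianPDFReal]
  have hc : ((1:ℝ≥0):ℝ) = 1 := rfl
  rw [hc]
  have hE : Real.exp (-(t - 0)^2 / (2*1))
      ≤ Real.exp (a*w + w^2/2) * Real.exp (-(t + w - 0)^2 / (2*1)) := by
    rw [← Real.exp_add, Real.exp_le_exp]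
    nlinarith [mul_nonneg (sub_nonneg.2 ht') hw]
  have hcpos : (0:ℝ) ≤ (√(2 * π * 1))⁻¹ := by positivity
  calc (√(2 * π * 1))⁻¹ * rexp (-(t - 0) ^ 2 / (2 * 1))
      ≤ (√(2 * π * 1))⁻¹ * (rexp (a*w + w^2/2) * rexp (-(t + w - 0)^2 / (2*1))) :=
        mul_le_mul_of_nonneg_left hE hcpos
    _ = rexp (a * w + w ^ 2 / 2) * ((√(2 * π * 1))⁻¹ * rexp (-(t + w - 0) ^ 2 / (2 * 1))) := by
        ring

lemma call_bounds {s k v : ℝ} (hs : 0 < s) (hk : 0 < k) (hv : 0 < v) :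
    max (s - k) 0 ≤ Call s k v ∧ Call s k v ≤ max (s - k) 0 + s * Real.sqrt v := by
  have hw : 0 < Real.sqrt v := Real.sqrt_pos.2 hv
  set w : ℝ := Real.sqrt v with hwdef
  have hw2 : w ^ 2 = v := Real.sq_sqrt hv.le
  set L : ℝ := Real.log (s / k) with hL
  set dp : ℝ := (L + v / 2) / w with hdp
  set dm : ℝ := (L - v / 2) / w with hdm
  have hsum : dm + w = dp := by
    rw [hdm, hdp]
    field_simp
    nlinarith [hw2]
  have hcall : Call s k v = s * stdNormalCDF dp - k * stdNormalCDF dm := by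
    rw [Call, if_neg hk.ne']
  have hexp1 : Real.exp (dm * w + w ^ 2 / 2) = s / k := by
    rw [hdm, div_mul_cancel₀ _ hw.ne', hw2]
    rw [show L - v/2 + v/2 = L by ring]
    exact Real.exp_log (div_pos hs hk)
  have hexp2 : Real.exp (-dp * w + w ^ 2 / 2) = k / s := by
    rw [hdp, ← neg_div, div_mul_cancel₀ _ hw.ne', hw2]
    rw [show -(L + v/2) + v/2 = -L by ring]
    rw [Real.exp_neg, Real.exp_log (div_pos hs hk)]
    rw [inv_div]
  -- lower bound 1: 0 ≤ Call
  have hlow1 : k * stdNormalCDF dm ≤ s * stdNormalCDF dp := by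
    have := cdf_master (a := dm) hw.le
    rw [hexp1, hsum] at this
    calc k * stdNormalCDF dm ≤ k * (s / k * stdNormalCDF dp) :=
          mul_le_mul_of_nonneg_left this hk.le
      _ = s * stdNormalCDF dp := by field_simp
  -- lower bound 2: s - k ≤ Call
  have hlow2 : s - k ≤ s * stdNormalCDF dp - k * stdNormalCDF dm := by
    have hmd : -dp + w = -dm := by linarith [hsum]
    have := cdf_master (a := -dp) hw.le
    rw [hexp2, hmd, cdf_neg, cdf_neg] at this
    have h2 : s * (1 - stdNormalCDF dp) ≤ k * (1 - stdNormalCDF dm) := by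
      calc s * (1 - stdNormalCDF dp) ≤ s * (k / s * (1 - stdNormalCDF dm)) :=
            mul_le_mul_of_nonneg_left this hs.le
        _ = k * (1 - stdNormalCDF dm) := by field_simp
    nlinarith
  have hΦdp1 : stdNormalCDF dp ≤ 1 := cdf_le_one dp
  have hΦdm0 : 0 ≤ stdNormalCDF dm := cdf_nonneg dm
  have hdiff : stdNormalCDF dp - stdNormalCDF dm ≤ w := by
    have h := cdf_diff_le (a := dm) (b := dp) (by linarith)
    linarith [h, hsum]
  constructor
  · rw [hcall]
    rcases max_cases (s - k) 0 with ⟨h1, _⟩ | ⟨h1, _⟩ <;> rw [h1]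
    · exact hlow2
    · linarith
  · rw [hcall]
    rcases le_total k s with hks | hks
    · rw [max_eq_left (by linarith)]
      nlinarith [mul_le_mul_of_nonneg_right (show k ≤ s from hks) (sub_nonneg.2 hΦdp1)]
    · rw [max_eq_right (by linarith)]
      nlinarith [mul_le_mul_of_nonneg_right (show s ≤ k from hks) hΦdm0]


/-- for fixed `s > 0`, `Call(s,·,v)` converges uniformly on `(0,∞)`
to the intrinsic value `(s-k)⁺` as `v → 0⁺`. -/
theorem stmt_9 (s : ℝ) (hs : 0 < s) :
    ∀ ε > (0 : ℝ), ∃ v₀ > (0 : ℝ), ∀ v, 0 < v → v ≤ v₀ →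
      ∀ k > (0 : ℝ), |Call s k v - max (s - k) 0| < ε := by
  intro ε hε
  refine ⟨(ε / (2 * s)) ^ 2, by positivity, fun v hv hvle k hk => ?_⟩
  obtain ⟨hlow, hup⟩ := call_bounds hs hk hv
  have hsv : Real.sqrt v ≤ ε / (2 * s) := by
    calc Real.sqrt v ≤ Real.sqrt ((ε / (2 * s)) ^ 2) := Real.sqrt_le_sqrt hvle
      _ = ε / (2 * s) := Real.sqrt_sq (by positivity)
  have h1 : s * Real.sqrt v ≤ ε / 2 := by
    calc s * Real.sqrt v ≤ s * (ε / (2 * s)) := mul_le_mul_of_nonneg_left hsv hs.le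
      _ = ε / 2 := by field_simp
  rw [abs_lt]
  constructor <;> nlinarith [Real.sqrt_nonneg v]
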